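/- Matching condition I: let (V*, W*) be a saddle point with φ(V*,W*) = max_{W ∈ 𝒲₁(E)} min_{V ∈ 𝒱(E,D)} φ(V,W), and suppose that V̂ := argmin_{V ∈ 𝒱(W*,D)} φ(V,W*) belongs to 𝒱(E,D). Then R_m(D|E) = φ(V*,W*) = max_{W ∈ 𝒲₁(E)} min_{V ∈ 𝒱(E,D)} φ(V,W). -/
import Mathlib


open scoped BigOperators

noncomputable section

namespace UWZ

/-- real-valued indicator of a proposition. -/
def ind (p : Prop) : ℝ := @ite ℝ p (Classical.propDecidable p) 1 0

/-- `P` is a probability distribution on the finite type `A`. -/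
def IsDist {A : Type*} [Fintype A] (P : A → ℝ) : Prop :=
  (∀ a, 0 ≤ P a) ∧ ∑ a, P a = 1

/-- `W` is a channel from `A` to `B`. -/
def IsChannel {A B : Type*} [Fintype A] [Fintype B] (W : A → B → ℝ) : Prop :=
  ∀ a, IsDist (W a)

/-- the `n`-fold i.i.d. extension of `P`. -/
def iid {A : Type*} (P : A → ℝ) (n : ℕ) (xs : Fin n → A) : ℝ := ∏ t, P (xs t)

/-- the memoryless (`n`-fold i.i.d.) extension of a channel. -/
def memoryless {A B : Type*} (W : A → B → ℝ) (n : ℕ)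
    (xs : Fin n → A) (ys : Fin n → B) : ℝ :=
  ∏ t, W (xs t) (ys t)

/-- the additive (per-letter, normalized) extension of a distortion measure. -/
def dseq {A B : Type*} (d : A → B → ℝ) (n : ℕ) (xs : Fin n → A) (ys : Fin n → B) : ℝ :=
  (∑ t, d (xs t) (ys t)) / n

/-- Shannon entropy (in bits). -/
def ent {A : Type*} [Fintype A] (P : A → ℝ) : ℝ := -∑ a, P a * Real.logb 2 (P a)

/-- mutual information of a joint distribution on `A × B` (in bits). -/
def mutInf {A B : Type*} [Fintype A] [Fintype B] (J : A × B → ℝ) : ℝ :=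
  ent (fun a => ∑ b, J (a, b)) + ent (fun b => ∑ a, J (a, b)) - ent J

section WZ

variable {X Y Xh : Type*} [Fintype X] [Fintype Y] [Fintype Xh] [DecidableEq Y]

/-- expected per-letter side-information distortion `e(P,W)` of channel `W`. -/
def eDist (P : X → ℝ) (e : X → Y → ℝ) (W : X → Y → ℝ) : ℝ :=
  ∑ x, ∑ y, P x * W x y * e x y

/-- the class `𝒲₁(E)` of single-letter channels. -/
def W1 (P : X → ℝ) (e : X → Y → ℝ) (E : ℝ) : Set (X → Y → ℝ) :=
  {W | IsChannel W ∧ eDist P e W ≤ E}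

/-- `d(V,W)`: expected reproduction distortion for a test channel `V` whose output
alphabet `𝒰` is the set of functions from `Y` to `Xh`. -/
def dVW (P : X → ℝ) (d : X → Xh → ℝ) (V : X → (Y → Xh) → ℝ) (W : X → Y → ℝ) : ℝ :=
  ∑ u : Y → Xh, ∑ x, ∑ y, P x * V x u * W x y * d x (u y)

/-- `φ(V,W) = I(U;X) − I(U;Y)` under the joint law `P_X(x)V(u|x)W(y|x)`. -/
def phi (P : X → ℝ) (V : X → (Y → Xh) → ℝ) (W : X → Y → ℝ) : ℝ :=
  mutInf (fun p : (Y → Xh) × X => P p.2 * V p.2 p.1) -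
    mutInf (fun p : (Y → Xh) × Y => ∑ x, P x * V x p.1 * W x p.2)

/-- `𝒱(W,D)`. -/
def Vset (P : X → ℝ) (d : X → Xh → ℝ) (W : X → Y → ℝ) (D : ℝ) :
    Set (X → (Y → Xh) → ℝ) :=
  {V | IsChannel V ∧ dVW P d V W ≤ D}

/-- `𝒱(E,D)`. -/
def Vrob (P : X → ℝ) (e : X → Y → ℝ) (d : X → Xh → ℝ) (E D : ℝ) :
    Set (X → (Y → Xh) → ℝ) :=
  {V | IsChannel V ∧ ∀ W ∈ W1 P e E, dVW P d V W ≤ D}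

/-- the Wyner–Ziv rate-distortion function `R_WZ(D|W)`. -/
def RWZ (P : X → ℝ) (d : X → Xh → ℝ) (D : ℝ) (W : X → Y → ℝ) : ℝ :=
  sInf ((fun V => phi P V W) '' Vset P d W D)

/-- the pseudo rate-distortion function `R̃_WZ(D|W,E)`. -/
def RWZt (P : X → ℝ) (e : X → Y → ℝ) (d : X → Xh → ℝ) (D E : ℝ) (W : X → Y → ℝ) : ℝ :=
  sInf ((fun V => phi P V W) '' Vrob P e d E D)

end WZ

/-- a (possibly stochastic) Wyner–Ziv code of blocklength `n`:
a stochastic encoder `enc : 𝒳ⁿ → ℳ` and a decoder `dec : ℳ × 𝒴ⁿ → 𝒳̂ⁿ`. -/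
structure Code (X Y Xh : Type*) [Fintype X] (n : ℕ) where
  M : ℕ
  Mpos : 0 < M
  enc : (Fin n → X) → Fin M → ℝ
  enc_channel : IsChannel enc
  dec : Fin M → (Fin n → Y) → Fin n → Xh

section Codes

variable {X Y Xh : Type*} [Fintype X] [Fintype Y] [Fintype Xh]

/-- expected reproduction distortion of a code over the channel `Wn`. -/
def Code.expDist {n : ℕ} (C : Code X Y Xh n) (P : X → ℝ) (d : X → Xh → ℝ)
    (Wn : (Fin n → X) → (Fin n → Y) → ℝ) : ℝ :=
  ∑ xs, ∑ ys, ∑ m, iid P n xs * Wn xs ys * C.enc xs m * dseq d n xs (C.dec m ys)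

/-- probability that the reproduction distortion of a code exceeds `D`, over channel `Wn`. -/
def Code.excessProb {n : ℕ} (C : Code X Y Xh n) (P : X → ℝ) (d : X → Xh → ℝ)
    (Wn : (Fin n → X) → (Fin n → Y) → ℝ) (D : ℝ) : ℝ :=
  ∑ xs, ∑ ys, ∑ m, iid P n xs * Wn xs ys * C.enc xs m * ind (D < dseq d n xs (C.dec m ys))

/-- a sequence of channels from `X`-sequences to `Y`-sequences. -/
abbrev ChannelSeq (X Y : Type*) := ∀ n : ℕ, (Fin n → X) → (Fin n → Y) → ℝ

/-- probability that the side-information distortion exceeds `E`. -/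
def excessSideProb (P : X → ℝ) (e : X → Y → ℝ) {n : ℕ}
    (Wn : (Fin n → X) → (Fin n → Y) → ℝ) (E : ℝ) : ℝ :=
  ∑ xs, ∑ ys, iid P n xs * Wn xs ys * ind (E < dseq e n xs ys)

/-- expected side-information distortion at blocklength `n`. -/
def avgSideDist (P : X → ℝ) (e : X → Y → ℝ) {n : ℕ}
    (Wn : (Fin n → X) → (Fin n → Y) → ℝ) : ℝ :=
  ∑ xs, ∑ ys, iid P n xs * Wn xs ys * dseq e n xs ys

/-- the maximum distortion constrained class `𝒲_m(E)`. -/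
def MaxClass (P : X → ℝ) (e : X → Y → ℝ) (E : ℝ) : Set (ChannelSeq X Y) :=
  {Wseq | (∀ n, IsChannel (Wseq n)) ∧
    ∀ δ > (0:ℝ), ∃ n0 : ℕ, ∀ n ≥ n0, excessSideProb P e (Wseq n) E ≤ δ}

/-- the average distortion constrained class `𝒲_a(E)`. -/
def AvgClass (P : X → ℝ) (e : X → Y → ℝ) (E : ℝ) : Set (ChannelSeq X Y) :=
  {Wseq | (∀ n, IsChannel (Wseq n)) ∧ ∀ n, 1 ≤ n → avgSideDist P e (Wseq n) ≤ E}

/-- `R` is an achievable rate at distortion level `D`, universally for the class `WC`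
of channel sequences. -/
def Achievable (P : X → ℝ) (d : X → Xh → ℝ) (WC : Set (ChannelSeq X Y)) (D R : ℝ) : Prop :=
  ∀ ε > (0:ℝ), ∃ n0 : ℕ, ∃ C : ∀ n, Code X Y Xh n, ∀ n ≥ n0,
    Real.logb 2 ((C n).M : ℝ) / (n : ℝ) ≤ R + ε ∧
    ∀ Wseq ∈ WC, (C n).expDist P d (Wseq n) ≤ D + ε

/-- the rate-distortion function `R_m(D|E)` of the maximum distortion constrained class. -/
def Rm (P : X → ℝ) (e : X → Y → ℝ) (d : X → Xh → ℝ) (D E : ℝ) : ℝ :=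
  sInf {R | Achievable P d (MaxClass P e E) D R}

/-- the rate-distortion function `R_a(D|E)` of the average distortion constrained class. -/
def Ra (P : X → ℝ) (e : X → Y → ℝ) (d : X → Xh → ℝ) (D E : ℝ) : ℝ :=
  sInf {R | Achievable P d (AvgClass P e E) D R}

end Codes

/-- a Heegard–Berger code: one encoder and two decoders. -/
structure HBCode (X Y Xh : Type*) (n : ℕ) where
  M : ℕ
  Mpos : 0 < M
  enc : (Fin n → X) → Fin M
  dec1 : Fin M → (Fin n → Y) → Fin n → Xh
  dec2 : Fin M → (Fin n → Y) → Fin n → Xh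

section HB

variable {X Y Xh : Type*} [Fintype X] [Fintype Y] [Fintype Xh]

/-- expected distortion of one branch of a Heegard–Berger code over the memoryless
extension of the single-letter channel `W`. -/
def hbExpDist {n M : ℕ} (P : X → ℝ) (d : X → Xh → ℝ) (W : X → Y → ℝ)
    (enc : (Fin n → X) → Fin M) (dec : Fin M → (Fin n → Y) → Fin n → Xh) : ℝ :=
  ∑ xs, ∑ ys, iid P n xs * memoryless W n xs ys * dseq d n xs (dec (enc xs) ys)

/-- achievability for the Heegard–Berger problem with side-information channels `W₁, W₂`. -/
def HBAchievable (P : X → ℝ) (d : X → Xh → ℝ) (W₁ W₂ : X → Y → ℝ) (D₁ D₂ R : ℝ) : Prop :=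
  ∀ ε > (0:ℝ), ∃ n0 : ℕ, ∃ C : ∀ n, HBCode X Y Xh n, ∀ n ≥ n0,
    Real.logb 2 ((C n).M : ℝ) / (n : ℝ) ≤ R + ε ∧
    hbExpDist P d W₁ (C n).enc (C n).dec1 ≤ D₁ + ε ∧
    hbExpDist P d W₂ (C n).enc (C n).dec2 ≤ D₂ + ε

/-- the Heegard–Berger rate-distortion function `R_HB(D₁,D₂|W₁,W₂)`. -/
def RHB (P : X → ℝ) (d : X → Xh → ℝ) (W₁ W₂ : X → Y → ℝ) (D₁ D₂ : ℝ) : ℝ :=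
  sInf {R | HBAchievable P d W₁ W₂ D₁ D₂ R}

end HB

/-- the classical (no side-information) rate-distortion function `R(D)`. -/
def RD {X Xh : Type*} [Fintype X] [Fintype Xh] (P : X → ℝ) (d : X → Xh → ℝ) (D : ℝ) : ℝ :=
  sInf ((fun Q : X → Xh → ℝ => mutInf fun p : X × Xh => P p.1 * Q p.1 p.2) ''
    {Q | IsChannel Q ∧ (∑ x, ∑ xh, P x * Q x xh * d x xh) ≤ D})

section Types

variable {X Y : Type*} [Fintype X] [Fintype Y] [DecidableEq X] [DecidableEq Y]

/-- the empirical distribution (type) `P_{x^n}` of a sequence. -/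
def empDist {n : ℕ} (xs : Fin n → X) (a : X) : ℝ :=
  ((Finset.univ.filter fun t => xs t = a).card : ℝ) / n

/-- the joint empirical distribution (joint type) of a pair of sequences. -/
def empJoint {n : ℕ} (xs : Fin n → X) (ys : Fin n → Y) (p : X × Y) : ℝ :=
  ((Finset.univ.filter fun t => xs t = p.1 ∧ ys t = p.2).card : ℝ) / n

/-- `x^n` is `P`-typical with constant `δ`. -/
def isTypical {n : ℕ} (P : X → ℝ) (δ : ℝ) (xs : Fin n → X) : Prop :=
  (∀ a, |empDist xs a - P a| ≤ δ) ∧ ∀ t, P (xs t) ≠ 0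

/-- `y^n` lies in the `W`-shell `T_W(x^n)` of `x^n`. -/
def inShell {n : ℕ} (xs : Fin n → X) (ys : Fin n → Y) (W : X → Y → ℝ) : Prop :=
  ∀ a b, empJoint xs ys (a, b) = empDist xs a * W a b

/-- cardinality of the `W`-shell of `x^n`. -/
def shellCard {n : ℕ} (xs : Fin n → X) (W : X → Y → ℝ) : ℕ :=
  Set.ncard {ys : Fin n → Y | inShell xs ys W}

end Types

/-- `W` is a conditional type with denominator `n` (all entries are multiples of `1/n`). -/
def isCondType {X Y : Type*} (n : ℕ) (W : X → Y → ℝ) : Prop :=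
  ∀ x y, ∃ k : ℕ, W x y = (k : ℝ) / n

section Perm

variable {X Y Xh : Type*} [Fintype X] [Fintype Y] [Fintype Xh]

/-- probability, under the permuted source/side-information pair, that the reproduction
distortion of the code `C` exceeds `D`. -/
def permExcess {n : ℕ} (Pxy : (Fin n → X) × (Fin n → Y) → ℝ) (C : Code X Y Xh n)
    (d : X → Xh → ℝ) (D : ℝ) (π : Equiv.Perm (Fin n)) : ℝ :=
  ∑ p : (Fin n → X) × (Fin n → Y), ∑ m,
    Pxy p * C.enc (p.1 ∘ π) m * ind (D < dseq d n (p.1 ∘ π) (C.dec m (p.2 ∘ π)))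

end Perm

section AuxBounds

lemma term_bound' {x : ℝ} (h0 : 0 ≤ x) (h1 : x ≤ 1) :
    0 ≤ -(x * Real.logb 2 x) ∧ -(x * Real.logb 2 x) ≤ 2 := by
  rcases eq_or_lt_of_le h0 with h | h
  · simp [← h]
  · have hlog2 : (0.6931471803 : ℝ) < Real.log 2 := Real.log_two_gt_d9
    have habs : |Real.log x * x| < 1 := Real.abs_log_mul_self_lt x h h1
    have hle : Real.log x ≤ 0 := Real.log_nonpos h0 h1
    have h2 : -(x * Real.log x) ≤ 1 := by
      have := neg_abs_le (Real.log x * x)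
      have := le_abs_self (Real.log x * x)
      nlinarith [abs_nonneg (Real.log x * x)]
    have h3 : 0 ≤ -(x * Real.log x) := by nlinarith
    rw [Real.logb, div_eq_inv_mul]
    constructor
    · have : 0 ≤ (Real.log 2)⁻¹ := by positivity
      nlinarith
    · have hinv : (Real.log 2)⁻¹ ≤ 2 := by
        rw [inv_le_comm₀ (by linarith) (by norm_num)]
        linarith
      have heq : -(x * ((Real.log 2)⁻¹ * Real.log x))
          = (Real.log 2)⁻¹ * (-(x * Real.log x)) := by ring
      rw [heq]
      nlinarith

lemma ent_bounds {A : Type*} [Fintype A] (Q : A → ℝ)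
    (h0 : ∀ a, 0 ≤ Q a) (h1 : ∀ a, Q a ≤ 1) :
    0 ≤ ent Q ∧ ent Q ≤ 2 * Fintype.card A := by
  have hent : ent Q = ∑ a, -(Q a * Real.logb 2 (Q a)) := by
    simp [ent]
  constructor
  · rw [hent]
    exact Finset.sum_nonneg fun a _ => (term_bound' (h0 a) (h1 a)).1
  · rw [hent]
    calc ∑ a, -(Q a * Real.logb 2 (Q a)) ≤ ∑ _a : A, (2:ℝ) :=
          Finset.sum_le_sum fun a _ => (term_bound' (h0 a) (h1 a)).2
      _ = 2 * Fintype.card A := by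
          simp [Finset.sum_const, mul_comm]

lemma mutInf_bounds {A B : Type*} [Fintype A] [Fintype B] (J : A × B → ℝ)
    (h0 : ∀ p, 0 ≤ J p) (hs : ∑ p, J p = 1) :
    -(2 * ((Fintype.card A : ℝ) * Fintype.card B)) ≤ mutInf J ∧
      mutInf J ≤ 2 * (Fintype.card A : ℝ) + 2 * Fintype.card B := by
  have hle1 : ∀ p, J p ≤ 1 := by
    intro p
    calc J p ≤ ∑ q, J q := Finset.single_le_sum (fun q _ => h0 q) (Finset.mem_univ p)
      _ = 1 := hs
  have hJsum : ∑ a, ∑ b, J (a, b) = 1 := by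
    rw [← hs, ← Fintype.sum_prod_type]
  have hA0 : ∀ a, 0 ≤ ∑ b, J (a, b) := fun a =>
    Finset.sum_nonneg fun b _ => h0 _
  have hA1 : ∀ a, ∑ b, J (a, b) ≤ 1 := by
    intro a
    calc ∑ b, J (a, b) ≤ ∑ a, ∑ b, J (a, b) :=
          Finset.single_le_sum (fun a' _ => hA0 a') (Finset.mem_univ a)
      _ = 1 := hJsum
  have hB0 : ∀ b, 0 ≤ ∑ a, J (a, b) := fun b =>
    Finset.sum_nonneg fun a _ => h0 _
  have hB1 : ∀ b, ∑ a, J (a, b) ≤ 1 := by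
    intro b
    have hswap : ∑ b, ∑ a, J (a, b) = 1 := by
      rw [Finset.sum_comm]; exact hJsum
    calc ∑ a, J (a, b) ≤ ∑ b, ∑ a, J (a, b) :=
          Finset.single_le_sum (fun b' _ => hB0 b') (Finset.mem_univ b)
      _ = 1 := hswap
  obtain ⟨hEA0, hEA1⟩ := ent_bounds (fun a => ∑ b, J (a, b)) hA0 hA1
  obtain ⟨hEB0, hEB1⟩ := ent_bounds (fun b => ∑ a, J (a, b)) hB0 hB1
  obtain ⟨hEJ0, hEJ1⟩ := ent_bounds J h0 hle1
  have hcard : (Fintype.card (A × B) : ℝ) = (Fintype.card A : ℝ) * Fintype.card B := by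
    rw [Fintype.card_prod]; push_cast; ring
  rw [hcard] at hEJ1
  unfold mutInf
  constructor <;> linarith

lemma phi_bounds {X Y Xh : Type*} [Fintype X] [Fintype Y] [Fintype Xh] [DecidableEq Y]
    (P : X → ℝ) (hP : IsDist P)
    (V : X → (Y → Xh) → ℝ) (hV : IsChannel V) (W : X → Y → ℝ) (hW : IsChannel W) :
    -(2 * ((Fintype.card (Y → Xh) : ℝ) * Fintype.card X
        + (Fintype.card (Y → Xh) : ℝ) * Fintype.card Y
        + Fintype.card (Y → Xh) + Fintype.card X + Fintype.card Y)) ≤ phi P V W ∧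
    phi P V W ≤ 2 * ((Fintype.card (Y → Xh) : ℝ) * Fintype.card X
        + (Fintype.card (Y → Xh) : ℝ) * Fintype.card Y
        + Fintype.card (Y → Xh) + Fintype.card X + Fintype.card Y) := by
  have h10 : ∀ p : (Y → Xh) × X, 0 ≤ P p.2 * V p.2 p.1 := fun p =>
    mul_nonneg (hP.1 p.2) ((hV p.2).1 p.1)
  have h1s : ∑ p : (Y → Xh) × X, P p.2 * V p.2 p.1 = 1 := by
    rw [Fintype.sum_prod_type, Finset.sum_comm]
    have : ∀ x : X, ∑ u : Y → Xh, P x * V x u = P x := by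
      intro x
      rw [← Finset.mul_sum, (hV x).2, mul_one]
    simp only [this]
    exact hP.2
  have h20 : ∀ p : (Y → Xh) × Y, 0 ≤ ∑ x, P x * V x p.1 * W x p.2 := fun p =>
    Finset.sum_nonneg fun x _ =>
      mul_nonneg (mul_nonneg (hP.1 x) ((hV x).1 p.1)) ((hW x).1 p.2)
  have h2s : ∑ p : (Y → Xh) × Y, ∑ x, P x * V x p.1 * W x p.2 = 1 := by
    rw [Fintype.sum_prod_type]
    have step : ∀ u : Y → Xh, ∑ y : Y, ∑ x, P x * V x u * W x y
        = ∑ x, P x * V x u := by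
      intro u
      rw [Finset.sum_comm]
      refine Finset.sum_congr rfl fun x _ => ?_
      rw [← Finset.mul_sum, (hW x).2, mul_one]
    simp only [step]
    rw [Finset.sum_comm]
    have : ∀ x : X, ∑ u : Y → Xh, P x * V x u = P x := by
      intro x
      rw [← Finset.mul_sum, (hV x).2, mul_one]
    simp only [this]
    exact hP.2
  obtain ⟨hM1l, hM1u⟩ := mutInf_bounds _ h10 h1s
  obtain ⟨hM2l, hM2u⟩ := mutInf_bounds _ h20 h2s
  have c1 : (0:ℝ) ≤ (Fintype.card (Y → Xh) : ℝ) := Nat.cast_nonneg _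
  have c2 : (0:ℝ) ≤ (Fintype.card X : ℝ) := Nat.cast_nonneg _
  have c3 : (0:ℝ) ≤ (Fintype.card Y : ℝ) := Nat.cast_nonneg _
  have c4 : (0:ℝ) ≤ (Fintype.card (Y → Xh) : ℝ) * Fintype.card X := mul_nonneg c1 c2
  have c5 : (0:ℝ) ≤ (Fintype.card (Y → Xh) : ℝ) * Fintype.card Y := mul_nonneg c1 c3
  unfold phi
  constructor <;> linarith

end AuxBounds

/-- **matching condition I.** Let `(V*, W*)` be a saddle point of `φ` over
`𝒱(E,D) × 𝒲₁(E)` with `φ(V*,W*) = max_{W ∈ 𝒲₁(E)} min_{V ∈ 𝒱(E,D)} φ(V,W)`, and suppose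
that the minimizer `V̂` of `φ(·,W*)` over `𝒱(W*,D)` belongs to `𝒱(E,D)`.  Then
`R_m(D|E) = φ(V*,W*) = max_{W ∈ 𝒲₁(E)} min_{V ∈ 𝒱(E,D)} φ(V,W)`.
(The two bounds of the paper's Theorem 1 are taken as hypotheses.) -/
theorem matching_condition_I
    {X Y Xh : Type*} [Fintype X] [Fintype Y] [Fintype Xh] [DecidableEq Y]
    [Nonempty X] [Nonempty Y] [Nonempty Xh]
    (P : X → ℝ) (hP : IsDist P)
    (e : X → Y → ℝ) (he0 : ∀ x y, 0 ≤ e x y) (heZ : ∀ x, ∃ y, e x y = 0)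
    (d : X → Xh → ℝ) (hd0 : ∀ x xh, 0 ≤ d x xh) (hdZ : ∀ x, ∃ xh, d x xh = 0)
    (D E : ℝ) (hD : 0 ≤ D) (hE : 0 ≤ E)
    -- the converse bound of Theorem 1
    (hlow : sSup ((fun W => RWZ P d D W) '' W1 P e E) ≤ Rm P e d D E)
    -- the direct bound of Theorem 1
    (hup : Rm P e d D E ≤
      sSup ((fun W => sInf ((fun V => phi P V W) '' Vrob P e d E D)) '' W1 P e E))
    -- the saddle point (V*, W*)
    (Vstar : X → (Y → Xh) → ℝ) (Wstar : X → Y → ℝ)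
    (hVstar : Vstar ∈ Vrob P e d E D) (hWstar : Wstar ∈ W1 P e E)
    (hsaddle1 : ∀ V ∈ Vrob P e d E D, phi P Vstar Wstar ≤ phi P V Wstar)
    (hsaddle2 : ∀ W ∈ W1 P e E, phi P Vstar W ≤ phi P Vstar Wstar)
    (hsaddleVal : phi P Vstar Wstar =
      sSup ((fun W => sInf ((fun V => phi P V W) '' Vrob P e d E D)) '' W1 P e E))
    -- V̂, the minimizer of φ(·,W*) over 𝒱(W*,D), and the matching condition V̂ ∈ 𝒱(E,D)
    (Vhat : X → (Y → Xh) → ℝ) (hVhat : Vhat ∈ Vset P d Wstar D)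
    (hVhatMin : ∀ V ∈ Vset P d Wstar D, phi P Vhat Wstar ≤ phi P V Wstar)
    (hmatch : Vhat ∈ Vrob P e d E D) :
    Rm P e d D E = phi P Vstar Wstar ∧
    phi P Vstar Wstar =
      sSup ((fun W => sInf ((fun V => phi P V W) '' Vrob P e d E D)) '' W1 P e E) := by
  classical
  set B : ℝ := 2 * ((Fintype.card (Y → Xh) : ℝ) * Fintype.card X
      + (Fintype.card (Y → Xh) : ℝ) * Fintype.card Y
      + Fintype.card (Y → Xh) + Fintype.card X + Fintype.card Y) with hBdef
  -- φ is bounded on channels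
  have hphi : ∀ (V : X → (Y → Xh) → ℝ), IsChannel V → ∀ (W : X → Y → ℝ),
      IsChannel W → -B ≤ phi P V W ∧ phi P V W ≤ B := fun V hV W hW =>
    phi_bounds P hP V hV W hW
  -- upper bound : Rm ≤ φ(V*,W*)
  have hub : Rm P e d D E ≤ phi P Vstar Wstar := by
    rw [hsaddleVal]; exact hup
  -- lower bound chain
  have h1 : phi P Vstar Wstar ≤ phi P Vhat Wstar := hsaddle1 Vhat hmatch
  -- RWZ(D|W*) = φ(V̂, W*)
  have hRWZeq : RWZ P d D Wstar = phi P Vhat Wstar := by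
    unfold RWZ
    apply le_antisymm
    · apply csInf_le
      · refine ⟨-B, ?_⟩
        rintro r ⟨V, hVmem, rfl⟩
        exact (hphi V hVmem.1 Wstar hWstar.1).1
      · exact ⟨Vhat, hVhat, rfl⟩
    · have hne : ((fun V => phi P V Wstar) '' Vset P d Wstar D).Nonempty :=
        ⟨phi P Vhat Wstar, ⟨Vhat, hVhat, rfl⟩⟩
      apply le_csInf hne
      rintro r ⟨V, hVmem, rfl⟩
      exact hVhatMin V hVmem
  -- the RWZ image is bounded above by B
  have hbddA : BddAbove ((fun W => RWZ P d D W) '' W1 P e E) := by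
    refine ⟨B, ?_⟩
    rintro r ⟨W, hWmem, rfl⟩
    have hVstarIn : Vstar ∈ Vset P d W D := ⟨hVstar.1, hVstar.2 W hWmem⟩
    have hle : RWZ P d D W ≤ phi P Vstar W := by
      unfold RWZ
      apply csInf_le
      · refine ⟨-B, ?_⟩
        rintro r ⟨V, hVmem, rfl⟩
        exact (hphi V hVmem.1 W hWmem.1).1
      · exact ⟨Vstar, hVstarIn, rfl⟩
    exact hle.trans (hphi Vstar hVstar.1 W hWmem.1).2
  have h2 : RWZ P d D Wstar ≤ sSup ((fun W => RWZ P d D W) '' W1 P e E) :=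
    le_csSup hbddA ⟨Wstar, hWstar, rfl⟩
  have hlb : phi P Vstar Wstar ≤ Rm P e d D E := by
    calc phi P Vstar Wstar ≤ phi P Vhat Wstar := h1
      _ = RWZ P d D Wstar := hRWZeq.symm
      _ ≤ sSup ((fun W => RWZ P d D W) '' W1 P e E) := h2
      _ ≤ Rm P e d D E := hlow
  exact ⟨le_antisymm hub hlb, hsaddleVal⟩

end UWZ
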